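/- Let (X, δ_H) be the hypergraph Steiner diversity of a weighted hypergraph H with all hyperedge sizes at most k (k ≥ 2), and let δ_S be the Steiner diversity of the graph G obtained by replacing each hyperedge U by a spanning tree on U whose edges all have weight w(U). Then δ_H(A) ≤ δ_S(A) ≤ (k−1)·δ_H(A) for all finite A. -/

import Mathlib

open scoped Classical

/-- Let δ_H be the hypergraph Steiner diversity of a weighted
hypergraph H = (V, E, w) with nonnegative weights and all hyperedge sizes at
most k (k ≥ 2), and let δ_S be the Steiner diversity of the weighted graph G
obtained by replacing each hyperedge U by a (chosen) spanning tree T(U) on U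
whose edges all carry weight w(U), the edge sets taken disjointly.  Then
δ_H(A) ≤ δ_S(A) ≤ (k−1)·δ_H(A) for all finite A. -/
theorem hypergraph_steiner_vs_graph_steiner {V : Type*} [DecidableEq V]
    (E : Finset (Finset V)) (w : Finset V → ℝ)
    (hw : ∀ U ∈ E, 0 ≤ w U)
    (hne : ∀ U ∈ E, U.Nonempty)
    (k : ℕ) (hk : 2 ≤ k) (hsize : ∀ U ∈ E, U.card ≤ k)
    -- T U is a spanning tree of the complete graph on U:
    (T : Finset V → Finset (V × V))
    (hTsub : ∀ U ∈ E, ∀ e ∈ T U, e.1 ∈ U ∧ e.2 ∈ U)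
    (hTconn : ∀ U ∈ E, ∀ u ∈ U, ∀ v ∈ U,
      Relation.ReflTransGen (fun x y => (x, y) ∈ T U ∨ (y, x) ∈ T U) u v)
    (hTcard : ∀ U ∈ E, (T U).card + 1 = U.card)
    -- the hypergraph Steiner diversity δ_H:
    (δH : Finset V → ℝ)
    (hδH : ∀ A : Finset V, δH A = sInf { c : ℝ | ∃ F : Finset (Finset V), F ⊆ E ∧
      (∀ a ∈ A, ∀ b ∈ A,
        Relation.ReflTransGen (fun u v => ∃ U ∈ F, u ∈ U ∧ v ∈ U) a b) ∧
      c = ∑ U ∈ F, w U })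
    -- the Steiner diversity δ_S of the graph G whose edge set is the disjoint
    -- union of the trees T U (an edge of G is a pair (U, e) with e ∈ T U, of
    -- weight w U):
    (δS : Finset V → ℝ)
    (hδS : ∀ A : Finset V, δS A = sInf { c : ℝ |
      ∃ F : Finset (Finset V × (V × V)),
      F ⊆ E.biUnion (fun U => (T U).image (fun e => (U, e))) ∧
      (∀ a ∈ A, ∀ b ∈ A,
        Relation.ReflTransGen (fun u v => ∃ p ∈ F, p.2 = (u, v) ∨ p.2 = (v, u)) a b) ∧
      c = ∑ p ∈ F, w p.1 }) :
    ∀ A : Finset V, δH A ≤ δS A ∧ δS A ≤ ((k : ℝ) - 1) * δH A := by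

  intro A
  rw [hδH A, hδS A]
  set SH : Set ℝ := { c : ℝ | ∃ F : Finset (Finset V), F ⊆ E ∧
      (∀ a ∈ A, ∀ b ∈ A,
        Relation.ReflTransGen (fun u v => ∃ U ∈ F, u ∈ U ∧ v ∈ U) a b) ∧
      c = ∑ U ∈ F, w U } with hSH
  set SS : Set ℝ := { c : ℝ |
      ∃ F : Finset (Finset V × (V × V)),
      F ⊆ E.biUnion (fun U => (T U).image (fun e => (U, e))) ∧
      (∀ a ∈ A, ∀ b ∈ A,
        Relation.ReflTransGen (fun u v => ∃ p ∈ F, p.2 = (u, v) ∨ p.2 = (v, u)) a b) ∧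
      c = ∑ p ∈ F, w p.1 } with hSS
  have hk1 : (0:ℝ) < (k:ℝ) - 1 := by
    have : (2:ℝ) ≤ (k:ℝ) := by exact_mod_cast hk
    linarith
  -- membership in the biUnion implies first component is in E and structure
  have hmemB : ∀ p : Finset V × (V × V),
      p ∈ E.biUnion (fun U => (T U).image (fun e => (U, e))) →
      p.1 ∈ E ∧ p.2 ∈ T p.1 := by
    intro p hp
    rw [Finset.mem_biUnion] at hp
    obtain ⟨U, hU, hpU⟩ := hp
    obtain ⟨e, he, rfl⟩ := Finset.mem_image.mp hpU
    exact ⟨hU, he⟩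
  -- lower bounds
  have hSHbdd : BddBelow SH := by
    refine ⟨0, fun c hc => ?_⟩
    obtain ⟨F, hF, _, rfl⟩ := hc
    exact Finset.sum_nonneg fun U hU => hw U (hF hU)
  have hSSbdd : BddBelow SS := by
    refine ⟨0, fun c hc => ?_⟩
    obtain ⟨F, hF, _, rfl⟩ := hc
    exact Finset.sum_nonneg fun p hp => hw p.1 (hmemB p (hF hp)).1
  -- Lemma A : from a graph connector, get a hypergraph connector of smaller weight
  have hA : ∀ c ∈ SS, ∃ c' ∈ SH, c' ≤ c := by
    intro c hc
    obtain ⟨F, hFsub, hconn, rfl⟩ := hc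
    refine ⟨∑ U ∈ F.image Prod.fst, w U, ⟨F.image Prod.fst, ?_, ?_, rfl⟩, ?_⟩
    · intro U hU
      obtain ⟨p, hp, rfl⟩ := Finset.mem_image.mp hU
      exact (hmemB p (hFsub hp)).1
    · intro a ha b hb
      refine Relation.ReflTransGen.mono ?_ _ _ (hconn a ha b hb)
      rintro u v ⟨p, hp, hp2⟩
      obtain ⟨hpE, hpT⟩ := hmemB p (hFsub hp)
      have hsub := hTsub p.1 hpE p.2 hpT
      refine ⟨p.1, Finset.mem_image_of_mem _ hp, ?_⟩
      rcases hp2 with h | h <;> rw [h] at hsub <;> tauto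
    · -- sum over image ≤ sum
      rw [← Finset.sum_fiberwise_of_maps_to (fun p hp => Finset.mem_image_of_mem Prod.fst hp)
        (fun p => w p.1)]
      refine Finset.sum_le_sum fun U hU => ?_
      obtain ⟨p, hp, hp1⟩ := Finset.mem_image.mp hU
      have hpf : p ∈ F.filter (fun q => q.1 = U) := Finset.mem_filter.mpr ⟨hp, hp1⟩
      have hle := Finset.single_le_sum (f := fun q : Finset V × (V × V) => w q.1)
        (fun q hq => hw q.1 (hmemB q (hFsub (Finset.mem_filter.mp hq).1)).1) hpf
      simpa [hp1] using hle
  -- Lemma B : from a hypergraph connector, get a graph connector of weight ≤ (k-1) ×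
  have hB : ∀ c ∈ SH, ∃ c' ∈ SS, c' ≤ ((k:ℝ) - 1) * c := by
    intro c hc
    obtain ⟨F, hFsub, hconn, rfl⟩ := hc
    set F' : Finset (Finset V × (V × V)) :=
      F.biUnion (fun U => (T U).image (fun e => (U, e))) with hF'
    refine ⟨∑ p ∈ F', w p.1, ⟨F', ?_, ?_, rfl⟩, ?_⟩
    · exact Finset.biUnion_subset_biUnion_of_subset_left _ hFsub
    · intro a ha b hb
      have key : ∀ u v : V, (∃ U ∈ F, u ∈ U ∧ v ∈ U) →
          Relation.ReflTransGen
            (fun u v => ∃ p ∈ F', p.2 = (u, v) ∨ p.2 = (v, u)) u v := by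
        rintro u v ⟨U, hU, hu, hv⟩
        refine Relation.ReflTransGen.mono ?_ _ _ (hTconn U (hFsub hU) u hu v hv)
        rintro x y (h | h)
        · exact ⟨(U, (x, y)), Finset.mem_biUnion.mpr
            ⟨U, hU, Finset.mem_image_of_mem _ h⟩, Or.inl rfl⟩
        · exact ⟨(U, (y, x)), Finset.mem_biUnion.mpr
            ⟨U, hU, Finset.mem_image_of_mem _ h⟩, Or.inr rfl⟩
      have h := hconn a ha b hb
      clear hb
      induction h with
      | refl => exact Relation.ReflTransGen.refl
      | tail _ hstep ih => exact ih.trans (key _ _ hstep)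
    · have hdisj : (F : Set (Finset V)).PairwiseDisjoint
          (fun U => (T U).image (fun e => (U, e))) := by
        intro U hU U' hU' hne'
        refine Finset.disjoint_left.mpr fun p hp hp' => hne' ?_
        obtain ⟨e, _, rfl⟩ := Finset.mem_image.mp hp
        obtain ⟨e', _, h⟩ := Finset.mem_image.mp hp'
        exact (congrArg Prod.fst h).symm
      rw [hF', Finset.sum_biUnion hdisj, Finset.mul_sum]
      refine Finset.sum_le_sum fun U hU => ?_
      rw [Finset.sum_image (fun a _ b _ h => congrArg Prod.snd h)]
      simp only [Finset.sum_const, nsmul_eq_mul]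
      have hcard : ((T U).card : ℝ) ≤ (k:ℝ) - 1 := by
        have h1 := hTcard U (hFsub hU)
        have h2 := hsize U (hFsub hU)
        have : (T U).card + 1 ≤ k := h1 ▸ h2
        have : ((T U).card : ℝ) + 1 ≤ (k:ℝ) := by exact_mod_cast this
        linarith
      exact mul_le_mul_of_nonneg_right hcard (hw U (hFsub hU))
  -- now conclude
  by_cases hSHne : SH.Nonempty
  · obtain ⟨c0, hc0⟩ := hSHne
    obtain ⟨c1, hc1, _⟩ := hB c0 hc0
    have hSSne : SS.Nonempty := ⟨c1, hc1⟩
    constructor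
    · refine le_csInf hSSne fun c hc => ?_
      obtain ⟨c', hc', hle⟩ := hA c hc
      exact (csInf_le hSHbdd hc').trans hle
    · have h1 : sInf SS / ((k:ℝ) - 1) ≤ sInf SH := by
        refine le_csInf ⟨c0, hc0⟩ fun c hc => ?_
        obtain ⟨c', hc', hle⟩ := hB c hc
        rw [div_le_iff₀ hk1]
        calc sInf SS ≤ c' := csInf_le hSSbdd hc'
          _ ≤ ((k:ℝ) - 1) * c := hle
          _ = c * ((k:ℝ) - 1) := mul_comm _ _
      have := (div_le_iff₀ hk1).mp h1
      linarith [this]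
  · have hSSne : ¬ SS.Nonempty := by
      intro h
      obtain ⟨c, hc⟩ := h
      obtain ⟨c', hc', _⟩ := hA c hc
      exact hSHne ⟨c', hc'⟩
    rw [Set.not_nonempty_iff_eq_empty] at hSHne hSSne
    rw [hSHne, hSSne, Real.sInf_empty]
    norm_num
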